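/- The eigenvalues of the adjacency matrix of the path graph with m vertices (Dynkin diagram of type A_m) are exactly 2·cos(kπ/(m+1)) for k = 1, …, m. -/

import Mathlib

/-- The adjacency matrix of the path graph (type `A_m` Dynkin diagram) on `m`
vertices. -/
noncomputable def pathAdj (m : ℕ) : Matrix (Fin m) (Fin m) ℝ :=
  fun i j => if i.val + 1 = j.val ∨ j.val + 1 = i.val then 1 else 0

lemma pathAdj_mulVec_aux (m : ℕ) (w : ℕ → ℝ) (h0 : w 0 = 0) (hm : w (m + 1) = 0)
    (i : Fin m) :
    (pathAdj m).mulVec (fun j => w (j.val + 1)) i = w i.val + w (i.val + 2) := by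
  have : (pathAdj m).mulVec (fun j => w (j.val + 1)) i =
      ∑ n ∈ Finset.range m,
        ((if i.val + 1 = n then w (n + 1) else 0) +
          (if n + 1 = i.val then w (n + 1) else 0)) := by
    rw [Matrix.mulVec, dotProduct]
    rw [← Fin.sum_univ_eq_sum_range
      (fun n => (if i.val + 1 = n then w (n + 1) else 0) +
          (if n + 1 = i.val then w (n + 1) else 0)) m]
    refine Finset.sum_congr rfl fun j _ => ?_
    simp only [pathAdj]
    by_cases h1 : i.val + 1 = j.val <;> by_cases h2 : j.val + 1 = i.val <;>
      simp [h1, h2] <;> omega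
  rw [this, Finset.sum_add_distrib]
  have hA : ∑ n ∈ Finset.range m, (if i.val + 1 = n then w (n + 1) else 0)
      = w (i.val + 2) := by
    rw [Finset.sum_ite_eq (Finset.range m) (i.val + 1) (fun n => w (n + 1))]
    by_cases h : i.val + 1 < m
    · simp [h]
    · rw [if_neg (by simp only [Finset.mem_range]; omega)]
      rw [show i.val + 2 = m + 1 by omega, hm]
  have hB : ∑ n ∈ Finset.range m, (if n + 1 = i.val then w (n + 1) else 0)
      = w i.val := by
    rcases Nat.eq_zero_or_pos i.val with h | h
    · rw [h, h0]
      apply Finset.sum_eq_zero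
      intro n _
      simp
    · have : ∑ n ∈ Finset.range m, (if n + 1 = i.val then w (n + 1) else 0)
          = ∑ n ∈ Finset.range m, (if i.val - 1 = n then w (n + 1) else 0) := by
        refine Finset.sum_congr rfl fun n _ => ?_
        congr 1
        simp only [eq_iff_iff]
        omega
      rw [this, Finset.sum_ite_eq (Finset.range m) (i.val - 1) (fun n => w (n + 1))]
      have hmem : i.val - 1 ∈ Finset.range m := by
        simp only [Finset.mem_range]; omega
      rw [if_pos hmem]
      congr 1
      omega
  rw [hA, hB, add_comm]

/-- The eigenvector for the `k`-th eigenvalue. -/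
lemma pathAdj_eigvec (m k : ℕ) (hk1 : 1 ≤ k) (hk2 : k ≤ m) :
    ∃ v : Fin m → ℝ, v ≠ 0 ∧
      (pathAdj m).mulVec v = (2 * Real.cos (k * Real.pi / (m + 1))) • v := by
  set θ : ℝ := k * Real.pi / (m + 1) with hθ
  have hm1 : (0:ℝ) < (m:ℝ) + 1 := by positivity
  have hθpos : 0 < θ := by
    rw [hθ]
    apply div_pos _ hm1
    have : (0:ℝ) < (k:ℝ) := by exact_mod_cast hk1
    positivity
  have hθlt : θ < Real.pi := by
    rw [hθ, div_lt_iff₀ hm1]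
    have hk : (k:ℝ) < (m:ℝ) + 1 := by exact_mod_cast Nat.lt_succ_of_le hk2
    nlinarith [Real.pi_pos]
  set w : ℕ → ℝ := fun j => Real.sin (j * θ) with hw
  refine ⟨fun j => w (j.val + 1), ?_, ?_⟩
  · intro hcontra
    have hm0 : 0 < m := lt_of_lt_of_le hk1 hk2
    have := congrFun hcontra ⟨0, hm0⟩
    simp only [hw, Pi.zero_apply] at this
    have hs : Real.sin θ ≠ 0 := ne_of_gt (Real.sin_pos_of_pos_of_lt_pi hθpos hθlt)
    apply hs
    simpa using this
  · funext i
    have h0 : w 0 = 0 := by simp [hw]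
    have hmm : w (m + 1) = 0 := by
      have : ((m:ℝ) + 1) * θ = k * Real.pi := by
        rw [hθ]; field_simp
      simp only [hw]
      push_cast
      rw [this, Real.sin_nat_mul_pi]
    rw [pathAdj_mulVec_aux m w h0 hmm i]
    have hrec : w i.val + w (i.val + 2) = 2 * Real.cos θ * w (i.val + 1) := by
      simp only [hw]
      push_cast
      have e1 : (i.val : ℝ) * θ = ((i.val : ℝ) + 1) * θ - θ := by ring
      have e2 : ((i.val : ℝ) + 2) * θ = ((i.val : ℝ) + 1) * θ + θ := by ring
      rw [e1, e2, Real.sin_sub, Real.sin_add]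
      ring
    rw [hrec]
    simp only [Pi.smul_apply, smul_eq_mul]

theorem pathAdj_eigenvalues (m : ℕ) (α : ℝ) :
    (∃ v : Fin m → ℝ, v ≠ 0 ∧ (pathAdj m).mulVec v = α • v) ↔
      ∃ k : ℕ, 1 ≤ k ∧ k ≤ m ∧ α = 2 * Real.cos (k * Real.pi / (m + 1)) := by
  constructor
  · rintro ⟨v, hv0, hv⟩
    by_contra hcon
    push_neg at hcon
    -- α differs from all 2 cos(kπ/(m+1)), 1 ≤ k ≤ m
    set f := Matrix.mulVecLin (pathAdj m) with hf
    set μ : Fin (m + 1) → ℝ :=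
      fun j => if j.val = 0 then α else 2 * Real.cos (j.val * Real.pi / (m + 1)) with hμ
    have hm1 : (0:ℝ) < (m:ℝ) + 1 := by positivity
    have hmem : ∀ k : ℕ, 1 ≤ k → k ≤ m →
        (k * Real.pi / (m + 1)) ∈ Set.Icc 0 Real.pi := by
      intro k h1 h2
      constructor
      · positivity
      · rw [div_le_iff₀ hm1]
        have : (k:ℝ) ≤ (m:ℝ) := by exact_mod_cast h2
        nlinarith [Real.pi_pos]
    have hinj : Function.Injective μ := by
      intro a b hab
      simp only [hμ] at hab
      by_cases ha : a.val = 0 <;> by_cases hb : b.val = 0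
      · omega
      · rw [if_pos ha, if_neg hb] at hab
        exact absurd hab (hcon b.val (by omega) (by omega))
      · rw [if_neg ha, if_pos hb] at hab
        exact absurd hab.symm (hcon a.val (by omega) (by omega))
      · rw [if_neg ha, if_neg hb] at hab
        have hcos : Real.cos (a.val * Real.pi / (m + 1))
            = Real.cos (b.val * Real.pi / (m + 1)) := by linarith
        have := Real.injOn_cos (hmem a.val (by omega) (by omega))
          (hmem b.val (by omega) (by omega)) hcos
        have hab' : (a.val : ℝ) = (b.val : ℝ) := by
          have h1 : (a.val : ℝ) * Real.pi = (b.val : ℝ) * Real.pi := by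
            have := congrArg (· * ((m : ℝ) + 1)) this
            simpa [div_mul_cancel₀, ne_of_gt hm1] using this
          exact mul_right_cancel₀ Real.pi_ne_zero h1
        have : a.val = b.val := by exact_mod_cast hab'
        omega
    have hvecs : ∀ j : Fin (m + 1), ∃ u : Fin m → ℝ, u ≠ 0 ∧
        (pathAdj m).mulVec u = (μ j) • u := by
      intro j
      by_cases hj : j.val = 0
      · exact ⟨v, hv0, by simp only [hμ]; rw [if_pos hj]; exact hv⟩
      · obtain ⟨u, hu0, hu⟩ := pathAdj_eigvec m j.val (by omega) (by omega)
        exact ⟨u, hu0, by simp only [hμ]; rw [if_neg hj]; exact hu⟩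
    choose xs hxs0 hxs using hvecs
    have hli : LinearIndependent ℝ xs := by
      apply Module.End.eigenvectors_linearIndependent' f μ hinj xs
      intro j
      refine ⟨?_, hxs0 j⟩
      rw [Module.End.mem_eigenspace_iff]
      simpa [hf, Matrix.mulVecLin_apply] using hxs j
    have hcard := hli.fintype_card_le_finrank
    simp only [Fintype.card_fin, Module.finrank_fintype_fun_eq_card] at hcard
    omega
  · rintro ⟨k, hk1, hk2, rfl⟩
    exact pathAdj_eigvec m k hk1 hk2
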